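/- Let q = (q₁, …, q₈) ∈ ℝ⁸ with all entries nonnegative. Then the following are equivalent: (i) q₁ + ⋯ + q₈ = 1, the function p₁ ↦ r(p₁, 9/11)·A·q is constant on [0,1], and the function p₂ ↦ r(9/11, p₂)·B·q is constant on [0,1]; (ii) q₆ = 15175619/10469888 − (23q₁ + 23q₂ + 12q₃ + 12q₄ + 11q₅)/11, q₇ = 15175619/10469888 − (23q₁ + 12q₂ + 23q₃ + 12q₄ + 11q₅)/11, and q₈ = −9940675/5234944 + (35q₁ + 24q₂ + 24q₃ + 13q₄ + 11q₅)/11. -/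
import Mathlib


open Matrix

/-- The product mixture `((1−p₁)(1−p₂), (1−p₁)p₂, p₁(1−p₂), p₁p₂)` in `ℝ⁴`. -/
noncomputable def prodMix (p₁ p₂ : ℝ) : Fin 4 → ℝ :=
  ![(1 - p₁) * (1 - p₂), (1 - p₁) * p₂, p₁ * (1 - p₂), p₁ * p₂]

/-- Player 1's payoff matrix against Banker at θ = 1/2. -/
noncomputable def matA : Matrix (Fin 4) (Fin 8) ℝ :=
  (-(16 / 13 ^ 9 : ℝ)) •
    !![5774122, 5774122, 4995370, 4995370, 4605994, 4605994, 3827242, 3827242;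
       6359098, 6359098, 5580346, 5580346, 5580346, 5580346, 4801594, 4801594;
       5127763, 5127763, 5300819, 5300819, 5387347, 5387347, 5560403, 5560403;
       5756515, 5756515, 5929571, 5929571, 5929571, 5929571, 6102627, 6102627]

/-- Player 2's payoff matrix against Banker at θ = 1/2. -/
noncomputable def matB : Matrix (Fin 4) (Fin 8) ℝ :=
  (-(16 / 13 ^ 9 : ℝ)) •
    !![5774122, 4995370, 5774122, 4995370, 4605994, 3827242, 4605994, 3827242;
       5127763, 5300819, 5127763, 5300819, 5387347, 5560403, 5387347, 5560403;
       6359098, 5580346, 6359098, 5580346, 5580346, 4801594, 5580346, 4801594;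
       5756515, 5929571, 5756515, 5929571, 5929571, 6102627, 5929571, 6102627]

set_option maxHeartbeats 1600000 in
/-- A nonnegative `q ∈ ℝ⁸` sums to 1 and makes both Players indifferent
(`p₁ ↦ r(p₁, 9/11)·A·q` and `p₂ ↦ r(9/11, p₂)·B·q` constant on `[0,1]`) if and
only if it satisfies the three linear equations. -/
theorem indifference_iff_linear_equations (q : Fin 8 → ℝ) (hq : ∀ i, 0 ≤ q i) :
    ((∑ i, q i = 1) ∧
      (∀ x ∈ Set.Icc (0 : ℝ) 1, ∀ y ∈ Set.Icc (0 : ℝ) 1,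
        prodMix x (9 / 11) ⬝ᵥ matA.mulVec q = prodMix y (9 / 11) ⬝ᵥ matA.mulVec q) ∧
      (∀ x ∈ Set.Icc (0 : ℝ) 1, ∀ y ∈ Set.Icc (0 : ℝ) 1,
        prodMix (9 / 11) x ⬝ᵥ matB.mulVec q = prodMix (9 / 11) y ⬝ᵥ matB.mulVec q)) ↔
    (q 5 = 15175619 / 10469888
        - (23 * q 0 + 23 * q 1 + 12 * q 2 + 12 * q 3 + 11 * q 4) / 11 ∧
      q 6 = 15175619 / 10469888
        - (23 * q 0 + 12 * q 1 + 23 * q 2 + 12 * q 3 + 11 * q 4) / 11 ∧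
      q 7 = -9940675 / 5234944
        + (35 * q 0 + 24 * q 1 + 24 * q 2 + 13 * q 3 + 11 * q 4) / 11) := by
  have mA0 : matA.mulVec q 0 = -(16 / 13 ^ 9 : ℝ) * (5774122 * q 0 + 5774122 * q 1 + 4995370 * q 2 + 4995370 * q 3 + 4605994 * q 4 + 4605994 * q 5 + 3827242 * q 6 + 3827242 * q 7) := by
    simp [matA, Matrix.mulVec, dotProduct, Fin.sum_univ_eight,
      Matrix.cons_val_zero, Matrix.cons_val_one, Matrix.head_cons, Matrix.cons_val_two,
      Matrix.tail_cons, Matrix.cons_val_three, Matrix.cons_val_four, Matrix.cons_val_succ,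
      Matrix.smul_apply, Matrix.of_apply, Matrix.empty_val', Matrix.cons_val',
      Matrix.cons_val_fin_one, Matrix.head_fin_const, smul_eq_mul,
      show (5:Fin 8) = Fin.succ 4 from rfl, show (6:Fin 8) = Fin.succ 5 from rfl,
      show (7:Fin 8) = Fin.succ 6 from rfl, show (5:Fin 7) = Fin.succ 4 from rfl,
      show (6:Fin 7) = Fin.succ 5 from rfl, show (5:Fin 6) = Fin.succ 4 from rfl]
    ring
  have mA1 : matA.mulVec q 1 = -(16 / 13 ^ 9 : ℝ) * (6359098 * q 0 + 6359098 * q 1 + 5580346 * q 2 + 5580346 * q 3 + 5580346 * q 4 + 5580346 * q 5 + 4801594 * q 6 + 4801594 * q 7) := by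
    simp [matA, Matrix.mulVec, dotProduct, Fin.sum_univ_eight,
      Matrix.cons_val_zero, Matrix.cons_val_one, Matrix.head_cons, Matrix.cons_val_two,
      Matrix.tail_cons, Matrix.cons_val_three, Matrix.cons_val_four, Matrix.cons_val_succ,
      Matrix.smul_apply, Matrix.of_apply, Matrix.empty_val', Matrix.cons_val',
      Matrix.cons_val_fin_one, Matrix.head_fin_const, smul_eq_mul,
      show (5:Fin 8) = Fin.succ 4 from rfl, show (6:Fin 8) = Fin.succ 5 from rfl,
      show (7:Fin 8) = Fin.succ 6 from rfl, show (5:Fin 7) = Fin.succ 4 from rfl,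
      show (6:Fin 7) = Fin.succ 5 from rfl, show (5:Fin 6) = Fin.succ 4 from rfl]
    ring
  have mA2 : matA.mulVec q 2 = -(16 / 13 ^ 9 : ℝ) * (5127763 * q 0 + 5127763 * q 1 + 5300819 * q 2 + 5300819 * q 3 + 5387347 * q 4 + 5387347 * q 5 + 5560403 * q 6 + 5560403 * q 7) := by
    simp [matA, Matrix.mulVec, dotProduct, Fin.sum_univ_eight,
      Matrix.cons_val_zero, Matrix.cons_val_one, Matrix.head_cons, Matrix.cons_val_two,
      Matrix.tail_cons, Matrix.cons_val_three, Matrix.cons_val_four, Matrix.cons_val_succ,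
      Matrix.smul_apply, Matrix.of_apply, Matrix.empty_val', Matrix.cons_val',
      Matrix.cons_val_fin_one, Matrix.head_fin_const, smul_eq_mul,
      show (5:Fin 8) = Fin.succ 4 from rfl, show (6:Fin 8) = Fin.succ 5 from rfl,
      show (7:Fin 8) = Fin.succ 6 from rfl, show (5:Fin 7) = Fin.succ 4 from rfl,
      show (6:Fin 7) = Fin.succ 5 from rfl, show (5:Fin 6) = Fin.succ 4 from rfl]
    ring
  have mA3 : matA.mulVec q 3 = -(16 / 13 ^ 9 : ℝ) * (5756515 * q 0 + 5756515 * q 1 + 5929571 * q 2 + 5929571 * q 3 + 5929571 * q 4 + 5929571 * q 5 + 6102627 * q 6 + 6102627 * q 7) := by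
    simp [matA, Matrix.mulVec, dotProduct, Fin.sum_univ_eight,
      Matrix.cons_val_zero, Matrix.cons_val_one, Matrix.head_cons, Matrix.cons_val_two,
      Matrix.tail_cons, Matrix.cons_val_three, Matrix.cons_val_four, Matrix.cons_val_succ,
      Matrix.smul_apply, Matrix.of_apply, Matrix.empty_val', Matrix.cons_val',
      Matrix.cons_val_fin_one, Matrix.head_fin_const, smul_eq_mul,
      show (5:Fin 8) = Fin.succ 4 from rfl, show (6:Fin 8) = Fin.succ 5 from rfl,
      show (7:Fin 8) = Fin.succ 6 from rfl, show (5:Fin 7) = Fin.succ 4 from rfl,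
      show (6:Fin 7) = Fin.succ 5 from rfl, show (5:Fin 6) = Fin.succ 4 from rfl]
    ring
  have mB0 : matB.mulVec q 0 = -(16 / 13 ^ 9 : ℝ) * (5774122 * q 0 + 4995370 * q 1 + 5774122 * q 2 + 4995370 * q 3 + 4605994 * q 4 + 3827242 * q 5 + 4605994 * q 6 + 3827242 * q 7) := by
    simp [matB, Matrix.mulVec, dotProduct, Fin.sum_univ_eight,
      Matrix.cons_val_zero, Matrix.cons_val_one, Matrix.head_cons, Matrix.cons_val_two,
      Matrix.tail_cons, Matrix.cons_val_three, Matrix.cons_val_four, Matrix.cons_val_succ,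
      Matrix.smul_apply, Matrix.of_apply, Matrix.empty_val', Matrix.cons_val',
      Matrix.cons_val_fin_one, Matrix.head_fin_const, smul_eq_mul,
      show (5:Fin 8) = Fin.succ 4 from rfl, show (6:Fin 8) = Fin.succ 5 from rfl,
      show (7:Fin 8) = Fin.succ 6 from rfl, show (5:Fin 7) = Fin.succ 4 from rfl,
      show (6:Fin 7) = Fin.succ 5 from rfl, show (5:Fin 6) = Fin.succ 4 from rfl]
    ring
  have mB1 : matB.mulVec q 1 = -(16 / 13 ^ 9 : ℝ) * (5127763 * q 0 + 5300819 * q 1 + 5127763 * q 2 + 5300819 * q 3 + 5387347 * q 4 + 5560403 * q 5 + 5387347 * q 6 + 5560403 * q 7) := by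
    simp [matB, Matrix.mulVec, dotProduct, Fin.sum_univ_eight,
      Matrix.cons_val_zero, Matrix.cons_val_one, Matrix.head_cons, Matrix.cons_val_two,
      Matrix.tail_cons, Matrix.cons_val_three, Matrix.cons_val_four, Matrix.cons_val_succ,
      Matrix.smul_apply, Matrix.of_apply, Matrix.empty_val', Matrix.cons_val',
      Matrix.cons_val_fin_one, Matrix.head_fin_const, smul_eq_mul,
      show (5:Fin 8) = Fin.succ 4 from rfl, show (6:Fin 8) = Fin.succ 5 from rfl,
      show (7:Fin 8) = Fin.succ 6 from rfl, show (5:Fin 7) = Fin.succ 4 from rfl,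
      show (6:Fin 7) = Fin.succ 5 from rfl, show (5:Fin 6) = Fin.succ 4 from rfl]
    ring
  have mB2 : matB.mulVec q 2 = -(16 / 13 ^ 9 : ℝ) * (6359098 * q 0 + 5580346 * q 1 + 6359098 * q 2 + 5580346 * q 3 + 5580346 * q 4 + 4801594 * q 5 + 5580346 * q 6 + 4801594 * q 7) := by
    simp [matB, Matrix.mulVec, dotProduct, Fin.sum_univ_eight,
      Matrix.cons_val_zero, Matrix.cons_val_one, Matrix.head_cons, Matrix.cons_val_two,
      Matrix.tail_cons, Matrix.cons_val_three, Matrix.cons_val_four, Matrix.cons_val_succ,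
      Matrix.smul_apply, Matrix.of_apply, Matrix.empty_val', Matrix.cons_val',
      Matrix.cons_val_fin_one, Matrix.head_fin_const, smul_eq_mul,
      show (5:Fin 8) = Fin.succ 4 from rfl, show (6:Fin 8) = Fin.succ 5 from rfl,
      show (7:Fin 8) = Fin.succ 6 from rfl, show (5:Fin 7) = Fin.succ 4 from rfl,
      show (6:Fin 7) = Fin.succ 5 from rfl, show (5:Fin 6) = Fin.succ 4 from rfl]
    ring
  have mB3 : matB.mulVec q 3 = -(16 / 13 ^ 9 : ℝ) * (5756515 * q 0 + 5929571 * q 1 + 5756515 * q 2 + 5929571 * q 3 + 5929571 * q 4 + 6102627 * q 5 + 5929571 * q 6 + 6102627 * q 7) := by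
    simp [matB, Matrix.mulVec, dotProduct, Fin.sum_univ_eight,
      Matrix.cons_val_zero, Matrix.cons_val_one, Matrix.head_cons, Matrix.cons_val_two,
      Matrix.tail_cons, Matrix.cons_val_three, Matrix.cons_val_four, Matrix.cons_val_succ,
      Matrix.smul_apply, Matrix.of_apply, Matrix.empty_val', Matrix.cons_val',
      Matrix.cons_val_fin_one, Matrix.head_fin_const, smul_eq_mul,
      show (5:Fin 8) = Fin.succ 4 from rfl, show (6:Fin 8) = Fin.succ 5 from rfl,
      show (7:Fin 8) = Fin.succ 6 from rfl, show (5:Fin 7) = Fin.succ 4 from rfl,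
      show (6:Fin 7) = Fin.succ 5 from rfl, show (5:Fin 6) = Fin.succ 4 from rfl]
    ring
  have dpA : ∀ (x : ℝ) (v : Fin 4 → ℝ), prodMix x (9/11) ⬝ᵥ v =
      (1-x)*(1-9/11) * v 0 + (1-x)*(9/11) * v 1 + x*(1-9/11) * v 2 + x*(9/11) * v 3 := by
    intro x v
    simp [prodMix, dotProduct, Fin.sum_univ_four, Matrix.cons_val_zero, Matrix.cons_val_one,
      Matrix.head_cons, Matrix.cons_val_two, Matrix.tail_cons, Matrix.cons_val_three]
  have dpB : ∀ (x : ℝ) (v : Fin 4 → ℝ), prodMix (9/11) x ⬝ᵥ v =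
      (1-9/11)*(1-x) * v 0 + (1-9/11)*x * v 1 + (9/11)*(1-x) * v 2 + (9/11)*x * v 3 := by
    intro x v
    simp [prodMix, dotProduct, Fin.sum_univ_four, Matrix.cons_val_zero, Matrix.cons_val_one,
      Matrix.head_cons, Matrix.cons_val_two, Matrix.tail_cons, Matrix.cons_val_three]
  have h01 : (0:ℝ) ∈ Set.Icc (0:ℝ) 1 := ⟨le_refl 0, zero_le_one⟩
  have h11 : (1:ℝ) ∈ Set.Icc (0:ℝ) 1 := ⟨zero_le_one, le_refl 1⟩
  constructor
  · rintro ⟨hsum, hA, hB⟩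
    have hA' := hA 0 h01 1 h11
    have hB' := hB 0 h01 1 h11
    rw [dpA, dpA, mA0, mA1, mA2, mA3] at hA'
    rw [dpB, dpB, mB0, mB1, mB2, mB3] at hB'
    rw [Fin.sum_univ_eight] at hsum
    norm_num at hA' hB'
    refine ⟨by linarith, by linarith, by linarith⟩
  · rintro ⟨h5, h6, h7⟩
    refine ⟨?_, ?_, ?_⟩
    · rw [Fin.sum_univ_eight, h5, h6, h7]; ring
    · intro x hx y hy
      rw [dpA, dpA, mA0, mA1, mA2, mA3, h5, h6, h7]; ring
    · intro x hx y hy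
      rw [dpB, dpB, mB0, mB1, mB2, mB3, h5, h6, h7]; ring
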